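/- Let Π be an ergodic invariant point process of finite intensity on a unimodular lcsc group G that concentrates on a single orbit, i.e. there exists Ω ∈ M₀ with P[Π ∈ G·Ω] = 1. Then the stabilizer Γ = Stab_G(Ω) is a lattice in G, and Π is (a thickening of) the corresponding lattice shift process. -/

import Mathlib

open MeasureTheory Set Filter Topology
open scoped ENNReal Pointwise

noncomputable section

/-- Left translation of a configuration. -/
def shift {G : Type*} [Mul G] (g : G) (ω : Set G) : Set G := (g * ·) '' ω

/-- The σ-algebra on the configuration space `Set G`, generated by the point-counting
functions `ω ↦ |ω ∩ U|` for Borel `U`. -/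
instance configMS (G : Type*) [MeasurableSpace G] : MeasurableSpace (Set G) :=
  MeasurableSpace.generateFrom
    {A : Set (Set G) | ∃ (U : Set G) (n : ℕ∞), MeasurableSet U ∧ A = {ω | (ω ∩ U).encard = n}}

/-- The expected number of points of the process in `U`. -/
def expCount {G : Type*} [MeasurableSpace G] (μ : Measure (Set G)) (U : Set G) : ℝ≥0∞ :=
  ∫⁻ ω, ((ω ∩ U).encard : ℝ≥0∞) ∂μ

/-- The space of rooted configurations. -/
def rooted (G : Type*) [One G] : Set (Set G) := {ω | (1 : G) ∈ ω}

/-- The Palm measure (relative to a reference set `U` of unit Haar volume) of a set `A`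
of rooted configurations. -/
def palmSet {G : Type*} [Group G] [MeasurableSpace G] (μ : Measure (Set G)) (U : Set G)
    (A : Set (Set G)) : ℝ≥0∞ :=
  (expCount μ U)⁻¹ * ∫⁻ ω, (({g ∈ U | shift g⁻¹ ω ∈ A}).encard : ℝ≥0∞) ∂μ

/-- The Palm expectation (relative to a reference set `U` of unit Haar volume) of a
function `h` of rooted configurations. -/
def palmLintegral {G : Type*} [Group G] [MeasurableSpace G] (μ : Measure (Set G)) (U : Set G)
    (h : Set G → ℝ≥0∞) : ℝ≥0∞ :=
  (expCount μ U)⁻¹ * ∫⁻ ω, ∑' x : ↥(ω ∩ U), h (shift (x : G)⁻¹ ω) ∂μ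

set_option linter.unusedSectionVars false

namespace Statement16Aux

variable {G : Type*}

section Shift
variable [Group G]

lemma mem_shift {g x : G} {ω : Set G} : x ∈ shift g ω ↔ g⁻¹ * x ∈ ω := by
  constructor
  · rintro ⟨y, hy, rfl⟩; simpa [← mul_assoc]
  · intro h; exact ⟨g⁻¹ * x, h, by simp [← mul_assoc]⟩

lemma shift_eq_preimage (g : G) (ω : Set G) : shift g ω = (g⁻¹ * ·) ⁻¹' ω := by
  ext x; simp [mem_shift]

lemma shift_shift (g h : G) (ω : Set G) : shift g (shift h ω) = shift (g * h) ω := by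
  ext x; simp [mem_shift, mul_assoc]

lemma shift_one (ω : Set G) : shift (1 : G) ω = ω := by
  ext x; simp [mem_shift]

lemma shift_inter (g : G) (s t : Set G) : shift g s ∩ t = shift g (s ∩ shift g⁻¹ t) := by
  ext x; simp only [Set.mem_inter_iff, mem_shift, inv_inv]
  constructor
  · rintro ⟨h1, h2⟩; exact ⟨h1, by simpa using h2⟩
  · rintro ⟨h1, h2⟩; exact ⟨h1, by simpa using h2⟩

lemma shift_encard (g : G) (s : Set G) : (shift g s).encard = s.encard :=
  (mul_right_injective g).encard_image s

/-- The cells of a countable dissection of `G`. -/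
def cellOf (W : Set G) (f : ℕ → G) (n : ℕ) : Set G :=
  shift (f n) W \ ⋃ m, ⋃ _ : m < n, shift (f m) W

lemma cellOf_subset (W : Set G) (f : ℕ → G) (n : ℕ) : cellOf W f n ⊆ shift (f n) W :=
  Set.diff_subset

lemma cellOf_disjoint (W : Set G) (f : ℕ → G) {m n : ℕ} (h : m ≠ n) :
    Disjoint (cellOf W f m) (cellOf W f n) := by
  rcases h.lt_or_gt with h | h
  · refine Set.disjoint_left.2 fun x hxm hxn => ?_
    exact hxn.2 (Set.mem_iUnion.2 ⟨m, Set.mem_iUnion.2 ⟨h, hxm.1⟩⟩)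
  · refine Set.disjoint_left.2 fun x hxm hxn => ?_
    exact hxm.2 (Set.mem_iUnion.2 ⟨n, Set.mem_iUnion.2 ⟨h, hxn.1⟩⟩)

lemma cellOf_cover {W : Set G} {f : ℕ → G} (hcover : ∀ x : G, ∃ n, x ∈ shift (f n) W)
    (x : G) : ∃ n, x ∈ cellOf W f n := by
  classical
  obtain hex := hcover x
  refine ⟨Nat.find hex, Nat.find_spec hex, ?_⟩
  intro hmem
  obtain ⟨m, hm⟩ := Set.mem_iUnion.1 hmem
  obtain ⟨hmn, hxm⟩ := Set.mem_iUnion.1 hm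
  exact (Nat.find_min hex hmn) hxm

/-- The saturation of a set by right multiplication by `Γ`. -/
def Rsat (Γ : Set G) (s : Set G) : Set G := ⋃ γ ∈ Γ, (· * γ) ⁻¹' s

lemma mem_Rsat {Γ s : Set G} {x : G} : x ∈ Rsat Γ s ↔ ∃ y ∈ s, x⁻¹ * y ∈ Γ := by
  simp only [Rsat, Set.mem_iUnion, Set.mem_preimage]
  constructor
  · rintro ⟨γ, hγ, hs⟩
    exact ⟨x * γ, hs, by simpa using hγ⟩
  · rintro ⟨y, hy, hγ⟩
    exact ⟨x⁻¹ * y, hγ, by simpa [← mul_assoc] using hy⟩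

/-- An exact fundamental domain for a discrete subgroup. -/
def Dom (Γ W : Set G) (f : ℕ → G) : Set G :=
  ⋃ n, (cellOf W f n \ ⋃ m, ⋃ _ : m < n, Rsat Γ (cellOf W f m))

lemma Dom_trans (H : Subgroup G) (W : Set G) (f : ℕ → G)
    (hW : ∀ (n : ℕ) (a b : G), a ∈ shift (f n) W → b ∈ shift (f n) W → a⁻¹ * b ∈ H → a = b)
    (hcover : ∀ x : G, ∃ n, x ∈ shift (f n) W) (g : G) :
    ∃! x : G, x ∈ Dom (↑H) W f ∧ x⁻¹ * g ∈ H := by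
  classical
  have hex : ∃ n, ∃ x, x ∈ cellOf W f n ∧ x⁻¹ * g ∈ H := by
    obtain ⟨n, hn⟩ := cellOf_cover hcover g
    exact ⟨n, g, hn, by simpa using H.one_mem⟩
  set n₀ := Nat.find hex with hn₀
  obtain ⟨x₀, hx₀c, hx₀g⟩ := Nat.find_spec hex
  have hx₀D : x₀ ∈ Dom (↑H) W f := by
    refine Set.mem_iUnion.2 ⟨n₀, hx₀c, ?_⟩
    intro hmem
    obtain ⟨m, hm⟩ := Set.mem_iUnion.1 hmem
    obtain ⟨hmn, hxm⟩ := Set.mem_iUnion.1 hm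
    obtain ⟨y, hyc, hyγ⟩ := mem_Rsat.1 hxm
    refine Nat.find_min hex hmn ⟨y, hyc, ?_⟩
    have : (x₀⁻¹ * y)⁻¹ * (x₀⁻¹ * g) ∈ H := H.mul_mem (H.inv_mem hyγ) hx₀g
    simpa [mul_assoc] using this
  refine ⟨x₀, ⟨hx₀D, hx₀g⟩, ?_⟩
  rintro x' ⟨hx'D, hx'g⟩
  obtain ⟨k, hk⟩ := Set.mem_iUnion.1 hx'D
  obtain ⟨hx'c, hx'not⟩ := hk
  have hPk : ∃ x, x ∈ cellOf W f k ∧ x⁻¹ * g ∈ H := ⟨x', hx'c, hx'g⟩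
  have hn₀k : n₀ ≤ k := Nat.find_min' hex hPk
  rcases eq_or_lt_of_le hn₀k with h | h
  · subst h
    exact hW n₀ x' x₀ (cellOf_subset W f n₀ hx'c) (cellOf_subset W f n₀ hx₀c)
      (by simpa [mul_assoc] using H.mul_mem hx'g (H.inv_mem hx₀g))
  · exfalso
    apply hx'not
    refine Set.mem_iUnion.2 ⟨n₀, Set.mem_iUnion.2 ⟨h, ?_⟩⟩
    refine mem_Rsat.2 ⟨x₀, hx₀c, ?_⟩
    have : (x'⁻¹ * g) * (x₀⁻¹ * g)⁻¹ ∈ H := H.mul_mem hx'g (H.inv_mem hx₀g)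
    simpa [mul_assoc] using this

end Shift

section Top
variable [Group G] [TopologicalSpace G] [IsTopologicalGroup G]

lemma isClosed_shift {g : G} {ω : Set G} (h : IsClosed ω) : IsClosed (shift g ω) := by
  rw [shift_eq_preimage]; exact h.preimage (continuous_mul_left g⁻¹)

lemma isOpen_shift {g : G} {ω : Set G} (h : IsOpen ω) : IsOpen (shift g ω) := by
  rw [shift_eq_preimage]; exact h.preimage (continuous_mul_left g⁻¹)

lemma shift_eq_homeo_image (g : G) (ω : Set G) : shift g ω = (Homeomorph.mulLeft g) '' ω := rfl

lemma discrete_shift {g : G} {ω : Set G} (h : DiscreteTopology ↥ω) :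
    DiscreteTopology ↥(shift g ω) := by
  rw [shift_eq_homeo_image]
  haveI := h
  exact ((Homeomorph.mulLeft g).image ω).symm.isEmbedding.discreteTopology

lemma isCompact_shift {g : G} {ω : Set G} (h : IsCompact ω) : IsCompact (shift g ω) :=
  h.image (continuous_mul_left g)

lemma closure_shift (g : G) (ω : Set G) : closure (shift g ω) = shift g (closure ω) := by
  rw [shift_eq_homeo_image, shift_eq_homeo_image]
  exact ((Homeomorph.mulLeft g).image_closure ω).symm

lemma countable_of_discrete_subtype [SecondCountableTopology G] {s : Set G}
    (hs : DiscreteTopology ↥s) : s.Countable := by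
  haveI := hs
  obtain ⟨t, htc, htd⟩ := TopologicalSpace.exists_countable_dense ↥s
  have ht : t = univ := by
    have := htd.closure_eq
    rwa [IsClosed.closure_eq (isClosed_discrete t)] at this
  rw [ht] at htc
  rw [← Set.countable_coe_iff]
  exact Set.countable_univ_iff.mp htc

lemma exists_isolating_open {s : Set G} (hs : DiscreteTopology ↥s) {x : G} (hx : x ∈ s) :
    ∃ u, IsOpen u ∧ x ∈ u ∧ ∀ y ∈ u ∩ s, y = x := by
  haveI := hs
  have h1 : IsOpen ({⟨x, hx⟩} : Set ↥s) := isOpen_discrete _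
  rw [isOpen_induced_iff] at h1
  obtain ⟨u, hu, hpre⟩ := h1
  refine ⟨u, hu, ?_, ?_⟩
  · have : (⟨x, hx⟩ : ↥s) ∈ (Subtype.val ⁻¹' u : Set ↥s) := by rw [hpre]; rfl
    exact this
  · rintro y ⟨hyu, hys⟩
    have : (⟨y, hys⟩ : ↥s) ∈ (Subtype.val ⁻¹' u : Set ↥s) := hyu
    rw [hpre] at this
    exact congrArg Subtype.val this

lemma closed_eq_of_pattern {b : ℕ → Set G} (hb : TopologicalSpace.IsTopologicalBasis (Set.range b))
    {S T : Set G} (hS : IsClosed S) (hT : IsClosed T)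
    (h : ∀ i, ((S ∩ b i).Nonempty ↔ (T ∩ b i).Nonempty)) : S = T := by
  have key : ∀ S T : Set G, IsClosed T → (∀ i, ((S ∩ b i).Nonempty → (T ∩ b i).Nonempty)) →
      S ⊆ T := by
    intro S T hT h x hxS
    by_contra hxT
    obtain ⟨u, hu, hxu, hsub⟩ := hb.exists_subset_of_mem_open hxT hT.isOpen_compl
    obtain ⟨i, rfl⟩ := hu
    obtain ⟨y, hyT, hyb⟩ := h i ⟨x, hxS, hxu⟩
    exact (hsub hyb) hyT
  exact subset_antisymm (key S T hT fun i => (h i).mp) (key T S hS fun i => (h i).mpr)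

end Top

lemma measurable_decide {α : Type*} [MeasurableSpace α] {p : α → Prop} [DecidablePred p]
    (h : MeasurableSet {x | p x}) : Measurable fun x => decide (p x) := by
  apply measurable_to_countable'
  intro b
  cases b
  · have : (fun x => decide (p x)) ⁻¹' {false} = {x | p x}ᶜ := by
      ext x; simp
    rw [this]; exact h.compl
  · have : (fun x => decide (p x)) ⁻¹' {true} = {x | p x} := by
      ext x; simp
    rw [this]; exact h

end Statement16Aux

open Statement16Aux

theorem statement16 {G : Type*} [Group G] [TopologicalSpace G] [IsTopologicalGroup G]
    [LocallyCompactSpace G] [SecondCountableTopology G] [MeasurableSpace G] [BorelSpace G]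
    [(Measure.haar : Measure G).IsMulRightInvariant]
    (μ : Measure (Set G)) [IsProbabilityMeasure μ]
    (hsupp : ∀ᵐ ω ∂μ, IsClosed ω ∧ DiscreteTopology ↥ω)
    (hinv : ∀ g : G, μ.map (shift g) = μ)
    (herg : ∀ S : Set (Set G), MeasurableSet S →
      (∀ (g : G) (ω : Set G), ω ∈ S → shift g ω ∈ S) → μ S = 0 ∨ μ S = 1)
    (U : Set G) (hU : MeasurableSet U) (hvol : Measure.haar U = 1)
    (hpos : 0 < expCount μ U) (hfin : expCount μ U < ⊤)
    (Ω : Set G) (hΩroot : (1 : G) ∈ Ω)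
    (horbit : μ {ω | ∃ g : G, ω = shift g Ω} = 1) :
    (∃ H : Subgroup G, (H : Set G) = {g : G | shift g Ω = Ω}) ∧
      DiscreteTopology ↥{g : G | shift g Ω = Ω} ∧
      (∃ s : Set G, MeasurableSet s ∧ Measure.haar s < ⊤ ∧
        ∀ g : G, ∃! x : G, x ∈ s ∧ x⁻¹ * g ∈ {g : G | shift g Ω = Ω}) ∧
      ∃ F : Finset G, Ω = {x : G | ∃ γ ∈ {g : G | shift g Ω = Ω}, ∃ f ∈ F, x = γ * f} := by
  classical
  -- the stabilizer subgroup
  set Γs : Set G := {g : G | shift g Ω = Ω} with hΓsdef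
  have hΓmem : ∀ {a : G}, a ∈ Γs ↔ shift a Ω = Ω := fun {a} => Iff.rfl
  let H : Subgroup G :=
    { carrier := Γs
      one_mem' := shift_one Ω
      mul_mem' := fun {a b} ha hb => by
        show shift (a * b) Ω = Ω
        rw [← shift_shift]
        rw [hΓmem.1 hb, hΓmem.1 ha]
      inv_mem' := fun {a} ha => by
        show shift a⁻¹ Ω = Ω
        conv_lhs => rw [← hΓmem.1 ha]
        rw [shift_shift, inv_mul_cancel, shift_one] }
  have hHcoe : (H : Set G) = Γs := rfl
  -- stabilizer from equal shifts
  have hstab_of : ∀ {y y' : G}, shift y Ω = shift y' Ω → y⁻¹ * y' ∈ Γs := by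
    intro y y' h
    show shift (y⁻¹ * y') Ω = Ω
    rw [← shift_shift, ← h, shift_shift, inv_mul_cancel, shift_one]
  -- closedness and discreteness of Ω
  have hbad : μ {ω : Set G | ¬ (IsClosed ω ∧ DiscreteTopology ↥ω)} = 0 := ae_iff.mp hsupp
  have hΩcd : IsClosed Ω ∧ DiscreteTopology ↥Ω := by
    have hne : ∃ ω₀ : Set G, (∃ g : G, ω₀ = shift g Ω) ∧
        (IsClosed ω₀ ∧ DiscreteTopology ↥ω₀) := by
      by_contra hcon
      push_neg at hcon
      have hsub : {ω : Set G | ∃ g : G, ω = shift g Ω} ⊆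
          {ω : Set G | ¬ (IsClosed ω ∧ DiscreteTopology ↥ω)} := fun ω hω => by
        intro hcd
        exact hcon ω hω hcd.1 hcd.2
      have hle := measure_mono (μ := μ) hsub
      rw [horbit, hbad] at hle
      exact absurd hle (by norm_num)
    obtain ⟨ω₀, ⟨g₀, rfl⟩, hcl₀, hdis₀⟩ := hne
    have hgg : shift g₀⁻¹ (shift g₀ Ω) = Ω := by
      rw [shift_shift, inv_mul_cancel, shift_one]
    constructor
    · have := isClosed_shift (g := g₀⁻¹) hcl₀
      rwa [hgg] at this
    · have := discrete_shift (g := g₀⁻¹) hdis₀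
      rwa [hgg] at this
  obtain ⟨hΩcl, hΩdis⟩ := hΩcd
  -- separation
  have h1cl : IsClosed ({1} : Set G) := by
    apply isClosed_of_closure_subset
    intro z hz
    have hzΩ : z ∈ Ω := closure_minimal (Set.singleton_subset_iff.2 hΩroot) hΩcl hz
    obtain ⟨u, hu, hzu, huniq⟩ := exists_isolating_open hΩdis hzΩ
    obtain ⟨y, hyu, hy1⟩ := mem_closure_iff.1 hz u hu hzu
    have h1u : (1 : G) ∈ u := by rwa [hy1] at hyu
    have : (1 : G) = z := huniq 1 ⟨h1u, hΩroot⟩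
    rw [← this]; rfl
  haveI hT1 : T1Space G := IsTopologicalGroup.t1Space G h1cl
  haveI hT2 : T2Space G := inferInstance
  haveI hMSC : MeasurableSingletonClass G := inferInstance
  -- basic facts on Γs
  have hΓsub : Γs ⊆ Ω := by
    intro γ hγ
    have h1 : γ * 1 ∈ shift γ Ω := ⟨1, hΩroot, rfl⟩
    rw [hΓmem.1 hγ] at h1
    simpa using h1
  have hΓdis : DiscreteTopology ↥Γs := DiscreteTopology.of_subset hΩdis hΓsub
  have hΓcount : Γs.Countable := countable_of_discrete_subtype hΓdis
  -- isolating neighbourhood of 1 in Γs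
  obtain ⟨V, hVopen, h1V, hViso⟩ := exists_isolating_open hΓdis (H.one_mem)
  obtain ⟨V', hV'nhds, hV'⟩ := exists_nhds_split_inv (hVopen.mem_nhds h1V)
  obtain ⟨K, hKcomp, hKnhds⟩ := exists_compact_mem_nhds (1 : G)
  set W : Set G := (interior V')⁻¹ ∩ interior K with hWdef
  have hWopen : IsOpen W := (isOpen_interior.inv).inter isOpen_interior
  have h1W : (1 : G) ∈ W :=
    ⟨by simpa using mem_interior_iff_mem_nhds.2 hV'nhds, mem_interior_iff_mem_nhds.2 hKnhds⟩
  have hWK : W ⊆ K := fun x hx => interior_subset hx.2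
  have hWkey : ∀ a b : G, a ∈ W → b ∈ W → a⁻¹ * b ∈ Γs → a = b := by
    intro a b ha hb hab
    have hav : a⁻¹ ∈ interior V' := Set.mem_inv.1 ha.1
    have hbv : b⁻¹ ∈ interior V' := Set.mem_inv.1 hb.1
    have hdiv : a⁻¹ / b⁻¹ ∈ V := hV' _ (interior_subset hav) _ (interior_subset hbv)
    rw [div_eq_mul_inv, inv_inv] at hdiv
    have h1 : a⁻¹ * b = 1 := hViso _ ⟨hdiv, hab⟩
    exact (inv_mul_eq_one.1 h1)
  have hWtrans : ∀ (h : G) (a b : G), a ∈ shift h W → b ∈ shift h W → a⁻¹ * b ∈ Γs → a = b := by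
    intro h a b ha hb hab
    rw [mem_shift] at ha hb
    have heq : (h⁻¹ * a)⁻¹ * (h⁻¹ * b) = a⁻¹ * b := by group
    have := hWkey _ _ ha hb (by rwa [heq])
    exact mul_left_cancel this
  -- countable cover by translates of W
  obtain ⟨T, hTc, hTuniv⟩ := TopologicalSpace.isOpen_iUnion_countable
    (fun g : G => shift g W) (fun g => isOpen_shift hWopen)
  have hself : ∀ x : G, x ∈ shift x W := fun x => mem_shift.2 (by simpa using h1W)
  have huniv : (⋃ g ∈ T, shift g W) = univ := by
    rw [hTuniv]
    exact Set.eq_univ_of_forall fun x => Set.mem_iUnion.2 ⟨x, hself x⟩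
  have hTne : T.Nonempty := by
    rcases Set.eq_empty_or_nonempty T with h | h
    · exfalso
      rw [h] at huniv
      simp only [Set.mem_empty_iff_false, Set.iUnion_of_empty, Set.iUnion_empty] at huniv
      exact absurd (huniv ▸ Set.mem_univ (1 : G)) (by simp)
    · exact h
  obtain ⟨f, hf⟩ := Set.Countable.exists_eq_range hTc hTne
  have hcover : ∀ x : G, ∃ n, x ∈ shift (f n) W := by
    intro x
    have hx : x ∈ ⋃ g ∈ T, shift g W := huniv ▸ Set.mem_univ x
    obtain ⟨g, hgT, hxg⟩ := by simpa using hx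
    rw [hf] at hgT
    obtain ⟨n, rfl⟩ := hgT
    exact ⟨n, hxg⟩
  set cell : ℕ → Set G := cellOf W f with hcelldef
  have hcellmeas : ∀ n, MeasurableSet (cell n) := by
    intro n
    refine ((isOpen_shift hWopen).measurableSet).diff ?_
    exact MeasurableSet.iUnion fun m => MeasurableSet.iUnion fun _ =>
      (isOpen_shift hWopen).measurableSet
  have hcellkey : ∀ (n : ℕ) (a b : G), a ∈ cell n → b ∈ cell n → a⁻¹ * b ∈ Γs → a = b :=
    fun n a b ha hb => hWtrans (f n) a b (cellOf_subset W f n ha) (cellOf_subset W f n hb)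
  -- the fundamental domain
  set D : Set G := Dom Γs W f with hDdef
  have hDtrans : ∀ g : G, ∃! x : G, x ∈ D ∧ x⁻¹ * g ∈ Γs :=
    fun g => Dom_trans H W f (fun n a b ha hb hm => hWtrans (f n) a b ha hb hm) hcover g
  have hRmeas : ∀ s : Set G, MeasurableSet s → MeasurableSet (Rsat Γs s) := by
    intro s hs
    exact MeasurableSet.biUnion hΓcount fun γ _ => (measurable_mul_const γ) hs
  have hDmeas : MeasurableSet D := by
    refine MeasurableSet.iUnion fun n => (hcellmeas n).diff ?_
    exact MeasurableSet.iUnion fun m => MeasurableSet.iUnion fun _ => hRmeas _ (hcellmeas m)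
  -- countable basis and patterns
  obtain ⟨B, hBc, hBne', hBbasis⟩ := TopologicalSpace.exists_countable_basis G
  have hBne : B.Nonempty := by
    obtain ⟨b, hbB, -, -⟩ := hBbasis.exists_subset_of_mem_open (Set.mem_univ (1 : G)) isOpen_univ
    exact ⟨b, hbB⟩
  obtain ⟨bs, hbs⟩ := Set.Countable.exists_eq_range hBc hBne
  have hbasis : TopologicalSpace.IsTopologicalBasis (Set.range bs) := hbs ▸ hBbasis
  have hbsopen : ∀ i, IsOpen (bs i) := fun i => hbasis.isOpen ⟨i, rfl⟩
  set pat : Set G → (ℕ → Bool) := fun s i => decide ((s ∩ bs i).Nonempty) with hpatdef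
  have hpat_iff : ∀ {S T : Set G}, pat S = pat T ↔ ∀ i, ((S ∩ bs i).Nonempty ↔ (T ∩ bs i).Nonempty) := by
    intro S T
    constructor
    · intro h i
      exact decide_eq_decide.mp (congrFun h i)
    · intro h
      funext i
      exact decide_eq_decide.mpr (h i)
  have hpat_closed : ∀ {S T : Set G}, IsClosed S → IsClosed T → pat S = pat T → S = T := by
    intro S T hS hT h
    exact closed_eq_of_pattern hbasis hS hT (hpat_iff.1 h)
  have hpat_closure : ∀ ω : Set G, pat (closure ω) = pat ω := by
    intro ω
    apply hpat_iff.2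
    intro i
    constructor
    · rintro ⟨x, hxc, hxb⟩
      obtain ⟨y, hyb, hyω⟩ := mem_closure_iff.1 hxc (bs i) (hbsopen i) hxb
      exact ⟨y, hyω, hyb⟩
    · rintro ⟨x, hxω, hxb⟩
      exact ⟨x, subset_closure hxω, hxb⟩
  have hpat_meas : Measurable pat := by
    apply measurable_pi_lambda
    intro i
    apply measurable_decide
    have h0 : MeasurableSet {ω : Set G | (ω ∩ bs i).encard = 0} :=
      MeasurableSpace.measurableSet_generateFrom ⟨bs i, 0, (hbsopen i).measurableSet, rfl⟩
    have heq : {ω : Set G | (ω ∩ bs i).Nonempty} = {ω : Set G | (ω ∩ bs i).encard = 0}ᶜ := by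
      ext ω
      simp [Set.nonempty_iff_ne_empty, Set.encard_eq_zero]
    rw [heq]
    exact h0.compl
  set pmap : G → (ℕ → Bool) := fun y => pat (shift y Ω) with hpmapdef
  have hpmap_meas : Measurable pmap := by
    apply measurable_pi_lambda
    intro i
    apply measurable_decide
    have heq : {y : G | (shift y Ω ∩ bs i).Nonempty} = ⋃ w ∈ Ω, (· * w) ⁻¹' (bs i) := by
      ext y
      simp only [Set.mem_setOf_eq, Set.mem_iUnion, Set.mem_preimage]
      constructor
      · rintro ⟨z, ⟨w, hw, rfl⟩, hzb⟩
        exact ⟨w, hw, hzb⟩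
      · rintro ⟨w, hw, hb⟩
        exact ⟨y * w, ⟨w, hw, rfl⟩, hb⟩
    rw [heq]
    exact (isOpen_biUnion fun w _ => (hbsopen i).preimage (continuous_mul_right w)).measurableSet
  -- the synchronization set
  set M : Set G → Set G := fun ω => {y : G | shift y Ω = closure ω} with hMdef
  have hMkey : ∀ (ω : Set G) (y : G), y ∈ M ω ↔ pmap y = pat ω := by
    intro ω y
    constructor
    · intro h
      show pat (shift y Ω) = pat ω
      rw [show shift y Ω = closure ω from h, hpat_closure]
    · intro h
      show shift y Ω = closure ω
      exact hpat_closed (isClosed_shift hΩcl) isClosed_closure (h.trans (hpat_closure ω).symm)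
  have hMcoset : ∀ (ω : Set G) (y y' : G), y ∈ M ω → y' ∈ M ω → y⁻¹ * y' ∈ Γs := by
    intro ω y y' hy hy'
    exact hstab_of ((show shift y Ω = closure ω from hy).trans
      (show shift y' Ω = closure ω from hy').symm)
  have hMcount : ∀ ω, (M ω).Countable := by
    intro ω
    rcases Set.eq_empty_or_nonempty (M ω) with h | ⟨y₀, hy₀⟩
    · rw [h]; exact Set.countable_empty
    · have hsub : M ω ⊆ (fun γ => y₀ * γ) '' Γs := by
        intro y hy
        exact ⟨y₀⁻¹ * y, hMcoset ω y₀ y hy₀ hy, by simp [← mul_assoc]⟩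
      exact Set.Countable.mono hsub (hΓcount.image _)
  have hMshift : ∀ (a : G) (ω : Set G), M (shift a ω) = shift a (M ω) := by
    intro a ω
    ext y
    rw [mem_shift]
    show shift y Ω = closure (shift a ω) ↔ shift (a⁻¹ * y) Ω = closure ω
    rw [closure_shift]
    constructor
    · intro h
      rw [← shift_shift]
      rw [h, shift_shift, inv_mul_cancel, shift_one]
    · intro h
      have : shift a (shift (a⁻¹ * y) Ω) = shift a (closure ω) := by rw [h]
      rwa [shift_shift, mul_inv_cancel_left] at this
  -- the counting functionals
  set F : Set G → Set G → ℝ≥0∞ := fun A ω => ((A ∩ M ω).encard : ℝ≥0∞) with hFdef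
  have hcnt : ∀ s : Set G, s.Countable → Measure.count s = (s.encard : ℝ≥0∞) := by
    intro s hs
    rw [Measure.count_apply hs.measurableSet]
  have hFcount : ∀ (A ω : Set G), F A ω = Measure.count (A ∩ M ω) := by
    intro A ω
    exact (hcnt _ ((hMcount ω).mono Set.inter_subset_right)).symm
  -- the events used to establish measurability of the counting functionals
  set Eset : ℕ → Set G → Set (Set G) := fun n A => pat ⁻¹' (pmap '' (cell n ∩ A)) with hEdef
  have hEmem : ∀ (n : ℕ) (A : Set G) (ω : Set G),
      ω ∈ Eset n A ↔ (cell n ∩ A ∩ M ω).Nonempty := by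
    intro n A ω
    constructor
    · rintro ⟨y, hy, hpy⟩
      exact ⟨y, hy, (hMkey ω y).2 hpy⟩
    · rintro ⟨y, hyc, hyM⟩
      exact ⟨y, hyc, (hMkey ω y).1 hyM⟩
  have hMinj : ∀ {y y' : G}, pmap y = pmap y' → y⁻¹ * y' ∈ Γs := by
    intro y y' h
    exact hstab_of (hpat_closed (isClosed_shift hΩcl) (isClosed_shift hΩcl) h)
  have hEmeas : ∀ (n : ℕ) (A : Set G), MeasurableSet A → MeasurableSet (Eset n A) := by
    intro n A hA
    apply hpat_meas
    -- Lusin–Souslin: the injective Borel image is Borel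
    letI : MetricSpace G := TopologicalSpace.metrizableSpaceMetric G
    set C : Set G := shift (f n) K with hCdef
    have hCcomp : IsCompact C := isCompact_shift hKcomp
    haveI : CompactSpace ↥C := isCompact_iff_compactSpace.mp hCcomp
    haveI : BorelSpace ↥C := Subtype.borelSpace C
    have hsubC : cell n ∩ A ⊆ C := by
      intro x hx
      have : x ∈ shift (f n) W := cellOf_subset W f n hx.1
      rw [mem_shift] at this ⊢
      exact hWK this
    have hs' : MeasurableSet (Subtype.val ⁻¹' (cell n ∩ A) : Set ↥C) :=
      measurable_subtype_coe ((hcellmeas n).inter hA)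
    have hinj : Set.InjOn pmap (cell n ∩ A) := by
      intro y hy y' hy' hpe
      exact hcellkey n y y' hy.1 hy'.1 (hMinj hpe)
    have himage : pmap '' (cell n ∩ A) =
        (fun y : ↥C => pmap ↑y) '' (Subtype.val ⁻¹' (cell n ∩ A)) := by
      rw [show (fun y : ↥C => pmap ↑y) = pmap ∘ Subtype.val from rfl, Set.image_comp,
        Subtype.image_preimage_coe, Set.inter_eq_self_of_subset_right hsubC]
    rw [himage]
    refine hs'.image_of_measurable_injOn (hpmap_meas.comp measurable_subtype_coe) ?_
    intro a ha b hb hab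
    exact Subtype.ext (hinj (by exact ha) (by exact hb) hab)
  -- the counting identity
  have hcellM : ∀ (n : ℕ) (A ω : Set G), (cell n ∩ A ∩ M ω).Subsingleton := by
    intro n A ω y hy y' hy'
    exact hcellkey n y y' hy.1.1 hy'.1.1 (hMcoset ω y y' hy.2 hy'.2)
  have hFsum : ∀ (A ω : Set G),
      F A ω = ∑' n, (Eset n A).indicator (fun _ => (1 : ℝ≥0∞)) ω := by
    intro A ω
    rw [hFcount]
    have hpart : A ∩ M ω = ⋃ n, (cell n ∩ A ∩ M ω) := by
      have h1 : ∀ n, cell n ∩ A ∩ M ω = cell n ∩ (A ∩ M ω) := fun n => by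
        rw [Set.inter_assoc]
      rw [show (⋃ n, cell n ∩ A ∩ M ω) = ⋃ n, cell n ∩ (A ∩ M ω) from by simp_rw [h1],
        ← Set.iUnion_inter]
      rw [show (⋃ n, cell n) = univ from
        Set.eq_univ_of_forall fun x => Set.mem_iUnion.2 (cellOf_cover hcover x)]
      simp
    rw [hpart, measure_iUnion ?_ ?_]
    · congr 1
      funext n
      rcases Set.eq_empty_or_nonempty (cell n ∩ A ∩ M ω) with he | hne
      · rw [he]
        have : ω ∉ Eset n A := fun hmem => by
          have hne := (hEmem n A ω).1 hmem
          rw [he] at hne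
          exact Set.not_nonempty_empty hne
        rw [Set.indicator_of_notMem this]
        simp
      · obtain ⟨y, hy⟩ := hne
        have hsingle : cell n ∩ A ∩ M ω = {y} := (hcellM n A ω).eq_singleton_of_mem hy
        rw [hsingle, Measure.count_singleton,
          Set.indicator_of_mem ((hEmem n A ω).2 ⟨y, hy⟩)]
    · intro i j hij
      have := cellOf_disjoint W f hij
      exact (this.mono (Set.inter_subset_left.trans Set.inter_subset_left)
        (Set.inter_subset_left.trans Set.inter_subset_left))
    · intro n
      exact (((hMcount ω).mono Set.inter_subset_right).measurableSet)
  have hFmeas : ∀ A : Set G, MeasurableSet A → Measurable (F A) := by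
    intro A hA
    have : F A = fun ω => ∑' n, (Eset n A).indicator (fun _ => (1 : ℝ≥0∞)) ω :=
      funext (hFsum A)
    rw [this]
    exact Measurable.ennreal_tsum fun n => measurable_const.indicator (hEmeas n A hA)
  -- equivariance of the counting functionals
  have hFshift : ∀ (a : G) (A ω : Set G), F A (shift a ω) = F (shift a⁻¹ A) ω := by
    intro a A ω
    show ((A ∩ M (shift a ω)).encard : ℝ≥0∞) = ((shift a⁻¹ A ∩ M ω).encard : ℝ≥0∞)
    rw [hMshift, Set.inter_comm, shift_inter, shift_encard, Set.inter_comm]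
  have hshift_ae : ∀ a : G, AEMeasurable (shift a) μ := by
    intro a
    by_contra hna
    have h0 : μ.map (shift a) = 0 := Measure.map_of_not_aemeasurable hna
    have hμ0 : μ = 0 := by rw [← hinv a, h0]
    have h1 : μ Set.univ = 1 := measure_univ
    rw [hμ0] at h1
    simp at h1
  have hlint_shift : ∀ (a : G) (h : Set G → ℝ≥0∞), Measurable h →
      ∫⁻ ω, h (shift a ω) ∂μ = ∫⁻ ω, h ω ∂μ := by
    intro a h hh
    have hmap : AEMeasurable h (μ.map (shift a)) := by
      rw [hinv a]; exact hh.aemeasurable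
    have := lintegral_map' hmap (hshift_ae a)
    rw [hinv a] at this
    exact this.symm
  -- the intensity measure of the synchronized points
  have hFempty : ∀ ω, F ∅ ω = 0 := by
    intro ω
    show (((∅ : Set G) ∩ M ω).encard : ℝ≥0∞) = 0
    simp
  have hFiUnion : ∀ (g : ℕ → Set G) (ω : Set G), (∀ i, MeasurableSet (g i)) →
      Pairwise (Function.onFun Disjoint g) → F (⋃ i, g i) ω = ∑' i, F (g i) ω := by
    intro g ω hg hd
    rw [hFcount, Set.iUnion_inter]
    rw [measure_iUnion ?_ ?_]
    · exact tsum_congr fun i => (hFcount (g i) ω).symm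
    · intro i j hij
      exact (hd hij).mono Set.inter_subset_left Set.inter_subset_left
    · intro i
      exact ((hMcount ω).mono Set.inter_subset_right).measurableSet
  set ν : Measure G := Measure.ofMeasurable (fun A _ => ∫⁻ ω, F A ω ∂μ)
    (by simp only [hFempty]; exact lintegral_zero)
    (by
      intro g hg hd
      have h1 : ∀ ω, F (⋃ i, g i) ω = ∑' i, F (g i) ω := fun ω => hFiUnion g ω hg hd
      simp only [h1]
      exact lintegral_tsum fun i => (hFmeas (g i) (hg i)).aemeasurable) with hνdef
  have hν_apply : ∀ A : Set G, MeasurableSet A → ν A = ∫⁻ ω, F A ω ∂μ := by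
    intro A hA
    exact Measure.ofMeasurable_apply A hA
  haveI hνleft : ν.IsMulLeftInvariant := by
    constructor
    intro a
    ext s hs
    rw [Measure.map_apply (continuous_mul_left a).measurable hs]
    have hpre : (a * ·) ⁻¹' s = shift a⁻¹ s := by
      ext x
      simp [mem_shift]
    rw [hpre, hν_apply _ (by rw [← hpre]; exact (continuous_mul_left a).measurable hs),
      hν_apply s hs]
    calc ∫⁻ ω, F (shift a⁻¹ s) ω ∂μ = ∫⁻ ω, F s (shift a ω) ∂μ := by
          refine lintegral_congr fun ω => ?_
          rw [hFshift]
      _ = ∫⁻ ω, F s ω ∂μ := hlint_shift a _ (hFmeas s hs)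
  have hFW : ∀ (g : G) (ω : Set G), F (shift g W) ω ≤ 1 := by
    intro g ω
    show (((shift g W ∩ M ω)).encard : ℝ≥0∞) ≤ 1
    have hss : (shift g W ∩ M ω).encard ≤ 1 := by
      rw [Set.encard_le_one_iff]
      intro a b ha hb
      exact hWtrans g a b ha.1 hb.1 (hMcoset ω a b ha.2 hb.2)
    exact_mod_cast hss
  have hνW : ∀ g : G, ν (shift g W) ≤ 1 := by
    intro g
    rw [hν_apply _ (isOpen_shift hWopen).measurableSet]
    calc ∫⁻ ω, F (shift g W) ω ∂μ ≤ ∫⁻ _, 1 ∂μ := lintegral_mono (hFW g)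
      _ = 1 := by simp
  haveI hνfin : IsFiniteMeasureOnCompacts ν := by
    constructor
    intro K' hK'
    obtain ⟨t, ht⟩ := hK'.elim_finite_subcover (fun g : G => shift g W)
      (fun g => isOpen_shift hWopen) (fun x _ => Set.mem_iUnion.2 ⟨x, hself x⟩)
    calc ν K' ≤ ν (⋃ g ∈ t, shift g W) := measure_mono ht
      _ ≤ ∑ g ∈ t, ν (shift g W) := measure_biUnion_finset_le t _
      _ ≤ ∑ _g ∈ t, 1 := Finset.sum_le_sum fun g _ => hνW g
      _ < ⊤ := by simp [lt_top_iff_ne_top]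
  -- Haar uniqueness
  have hνhaar : ν = ν.haarScalarFactor Measure.haar • Measure.haar :=
    Measure.isMulLeftInvariant_eq_smul ν Measure.haar
  set c : ℝ≥0∞ := (ν.haarScalarFactor Measure.haar : ℝ≥0∞) with hcdef
  have hνc : ∀ A : Set G, ν A = c * Measure.haar A := by
    intro A
    rw [hνhaar]
    simp only [Measure.smul_apply, ENNReal.smul_def, smul_eq_mul, hcdef]
  have hcT : c ≠ ⊤ := ENNReal.coe_ne_top
  -- ν D = 1
  have hFD_le : ∀ ω, F D ω ≤ 1 := by
    intro ω
    show (((D ∩ M ω)).encard : ℝ≥0∞) ≤ 1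
    have hss : (D ∩ M ω).encard ≤ 1 := by
      rw [Set.encard_le_one_iff]
      intro a b ha hb
      have hγ : a⁻¹ * b ∈ Γs := hMcoset ω a b ha.2 hb.2
      have h1 : b ∈ D ∧ b⁻¹ * b ∈ Γs := ⟨hb.1, by rw [inv_mul_cancel]; exact H.one_mem⟩
      have h2 : a ∈ D ∧ a⁻¹ * b ∈ Γs := ⟨ha.1, hγ⟩
      exact ((hDtrans b).unique h2 h1)
    exact_mod_cast hss
  have hν_D_le : ν D ≤ 1 := by
    rw [hν_apply D hDmeas]
    calc ∫⁻ ω, F D ω ∂μ ≤ ∫⁻ _, 1 ∂μ := lintegral_mono hFD_le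
      _ = 1 := by simp
  have hν_D_ge : 1 ≤ ν D := by
    set S : Set (Set G) := {ω : Set G | 1 ≤ F D ω} with hSdef
    have hSmeas : MeasurableSet S := measurableSet_le measurable_const (hFmeas D hDmeas)
    have hOsub : {ω : Set G | ∃ g : G, ω = shift g Ω} ⊆
        S ∪ {ω : Set G | ¬ (IsClosed ω ∧ DiscreteTopology ↥ω)} := by
      rintro ω ⟨g, rfl⟩
      by_cases hcd : IsClosed (shift g Ω) ∧ DiscreteTopology ↥(shift g Ω)
      · left
        show 1 ≤ F D (shift g Ω)
        obtain ⟨x, ⟨hxD, hxγ⟩, -⟩ := hDtrans g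
        have hxM : x ∈ M (shift g Ω) := by
          show shift x Ω = closure (shift g Ω)
          rw [hcd.1.closure_eq]
          have : shift x (shift (x⁻¹ * g) Ω) = shift x Ω := by rw [hΓmem.1 hxγ]
          rw [shift_shift, mul_inv_cancel_left] at this
          exact this.symm
        have hne : (D ∩ M (shift g Ω)).Nonempty := ⟨x, hxD, hxM⟩
        show (1 : ℝ≥0∞) ≤ ((D ∩ M (shift g Ω)).encard : ℝ≥0∞)
        have := Set.one_le_encard_iff_nonempty.2 hne
        exact_mod_cast this
      · right; exact hcd
    have hμS : 1 ≤ μ S := by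
      calc (1 : ℝ≥0∞) = μ {ω : Set G | ∃ g : G, ω = shift g Ω} := horbit.symm
        _ ≤ μ (S ∪ {ω : Set G | ¬ (IsClosed ω ∧ DiscreteTopology ↥ω)}) :=
            measure_mono hOsub
        _ ≤ μ S + μ {ω : Set G | ¬ (IsClosed ω ∧ DiscreteTopology ↥ω)} :=
            measure_union_le _ _
        _ = μ S := by rw [hbad, add_zero]
    rw [hν_apply D hDmeas]
    calc (1 : ℝ≥0∞) ≤ μ S := hμS
      _ = ∫⁻ ω, S.indicator (fun _ => (1 : ℝ≥0∞)) ω ∂μ := by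
          rw [lintegral_indicator_const hSmeas, one_mul]
      _ ≤ ∫⁻ ω, F D ω ∂μ := by
          refine lintegral_mono fun ω => ?_
          by_cases hω : ω ∈ S
          · rw [Set.indicator_of_mem hω]; exact hω
          · rw [Set.indicator_of_notMem hω]; exact bot_le
  have hνD : ν D = 1 := le_antisymm hν_D_le hν_D_ge
  have hcD : c * Measure.haar D = 1 := by rw [← hνc]; exact hνD
  have hc0 : c ≠ 0 := by
    intro h
    rw [h, zero_mul] at hcD
    exact zero_ne_one hcD
  have hhaarD : Measure.haar D < ⊤ := by
    by_contra h
    push_neg at h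
    rw [top_le_iff.1 h, ENNReal.mul_top hc0] at hcD
    exact (ENNReal.top_ne_one) hcD
  -- finiteness of the number of cosets
  have hbound : ∀ t : Finset G, (∀ x ∈ t, x ∈ Ω) →
      (∀ x ∈ t, ∀ y ∈ t, x ≠ y → x * y⁻¹ ∉ Γs) →
      (t.card : ℝ≥0∞) * c ≤ expCount μ U := by
    intro t htΩ htd
    have hAmeas : ∀ x : G, MeasurableSet ((· * x) ⁻¹' U) :=
      fun x => (measurable_mul_const x) hU
    have hνA : ∀ x : G, ν ((· * x) ⁻¹' U) = c := by
      intro x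
      rw [hνc, measure_preimage_mul_right _ x U, hvol, mul_one]
    have hae : ∀ᵐ ω ∂μ, (∑ x ∈ t, F ((· * x) ⁻¹' U) ω) ≤ ((ω ∩ U).encard : ℝ≥0∞) := by
      filter_upwards [hsupp] with ω hω
      have hωcount : ω.Countable := countable_of_discrete_subtype hω.2
      set img : G → Set G := fun x => (· * x) '' ((· * x) ⁻¹' U ∩ M ω) with himgdef
      have hsub : ∀ x ∈ t, img x ⊆ ω ∩ U := by
        rintro x hx z ⟨y, ⟨hyU, hyM⟩, rfl⟩
        constructor
        · have : y * x ∈ shift y Ω := ⟨x, htΩ x hx, rfl⟩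
          rwa [show shift y Ω = closure ω from hyM, hω.1.closure_eq] at this
        · exact hyU
      have hdisj : (↑t : Set G).PairwiseDisjoint img := by
        intro x hx x' hx' hxx'
        refine Set.disjoint_left.2 ?_
        rintro z ⟨y, ⟨-, hyM⟩, rfl⟩ ⟨y', ⟨-, hy'M⟩, hz⟩
        have hγ : y⁻¹ * y' ∈ Γs := hMcoset ω y y' hyM hy'M
        have hxeq : x * x'⁻¹ = y⁻¹ * y' := by
          have hz' : y' * x' = y * x := hz
          have hy'e : y' = y * x * x'⁻¹ := by
            calc y' = (y' * x') * x'⁻¹ := by group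
              _ = (y * x) * x'⁻¹ := by rw [hz']
          rw [hy'e]; group
        exact htd x hx x' hx' hxx' (hxeq ▸ hγ)
      have hFimg : ∀ x : G, F ((· * x) ⁻¹' U) ω = Measure.count (img x) := by
        intro x
        have h1 : (img x).encard = ((· * x) ⁻¹' U ∩ M ω).encard :=
          (mul_left_injective x).encard_image _
        have h2 : (img x).Countable := (((hMcount ω).mono Set.inter_subset_right).image _)
        rw [hcnt _ h2]
        show (((· * x) ⁻¹' U ∩ M ω).encard : ℝ≥0∞) = _
        rw [h1]
      calc ∑ x ∈ t, F ((· * x) ⁻¹' U) ω = ∑ x ∈ t, Measure.count (img x) :=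
            Finset.sum_congr rfl fun x _ => hFimg x
        _ = Measure.count (⋃ x ∈ t, img x) :=
            (measure_biUnion_finset hdisj fun x _ =>
              ((((hMcount ω).mono Set.inter_subset_right).image _)).measurableSet).symm
        _ ≤ Measure.count (ω ∩ U) := measure_mono (Set.iUnion₂_subset hsub)
        _ = ((ω ∩ U).encard : ℝ≥0∞) := hcnt _ (hωcount.mono Set.inter_subset_left)
    calc (t.card : ℝ≥0∞) * c = ∑ _x ∈ t, c := by
          rw [Finset.sum_const, nsmul_eq_mul]
      _ = ∑ x ∈ t, ν ((· * x) ⁻¹' U) := Finset.sum_congr rfl fun x _ => (hνA x).symm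
      _ = ∑ x ∈ t, ∫⁻ ω, F ((· * x) ⁻¹' U) ω ∂μ :=
          Finset.sum_congr rfl fun x _ => hν_apply _ (hAmeas x)
      _ = ∫⁻ ω, ∑ x ∈ t, F ((· * x) ⁻¹' U) ω ∂μ :=
          (lintegral_finset_sum t fun x _ => hFmeas _ (hAmeas x)).symm
      _ ≤ ∫⁻ ω, ((ω ∩ U).encard : ℝ≥0∞) ∂μ := lintegral_mono_ae hae
      _ = expCount μ U := rfl
  -- coset representatives
  set P : G ⧸ H → Prop := fun q => ∃ x : G, x ∈ Ω ∧ (QuotientGroup.mk x⁻¹ : G ⧸ H) = q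
    with hPdef
  set r : G ⧸ H → G := fun q => if h : P q then Classical.choose h else 1 with hrdef
  have hrspec : ∀ q : G ⧸ H, P q → r q ∈ Ω ∧ (QuotientGroup.mk (r q)⁻¹ : G ⧸ H) = q := by
    intro q hq
    have := Classical.choose_spec hq
    rw [hrdef]
    simp only [dif_pos hq]
    exact this
  have hQfin : {q : G ⧸ H | P q}.Finite := by
    by_contra hinf
    have hinf' : {q : G ⧸ H | P q}.Infinite := hinf
    obtain ⟨n, hn⟩ : ∃ n : ℕ, expCount μ U < n * c := by
      have hdiv : expCount μ U / c ≠ ⊤ := by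
        exact (ENNReal.div_lt_top hfin.ne hc0).ne
      obtain ⟨n, hn⟩ := ENNReal.exists_nat_gt hdiv
      exact ⟨n, by rwa [ENNReal.div_lt_iff (Or.inl hc0) (Or.inl hcT)] at hn⟩
    obtain ⟨s, hsubQ, hcard⟩ := hinf'.exists_subset_card_eq n
    have hrinj : Set.InjOn r ↑s := by
      intro q hq q' hq' hrq
      have h1 := (hrspec q (hsubQ hq)).2
      have h2 := (hrspec q' (hsubQ hq')).2
      rw [← h1, ← h2, hrq]
    set t : Finset G := s.image r with htdef
    have htcard : t.card = n := by
      rw [htdef, Finset.card_image_of_injOn hrinj, hcard]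
    have htΩ : ∀ x ∈ t, x ∈ Ω := by
      intro x hx
      obtain ⟨q, hq, rfl⟩ := Finset.mem_image.1 hx
      exact (hrspec q (hsubQ hq)).1
    have htd : ∀ x ∈ t, ∀ y ∈ t, x ≠ y → x * y⁻¹ ∉ Γs := by
      intro x hx y hy hxy hmem
      obtain ⟨q, hq, rfl⟩ := Finset.mem_image.1 hx
      obtain ⟨q', hq', rfl⟩ := Finset.mem_image.1 hy
      have hH : (r q) * (r q')⁻¹ ∈ H := hmem
      have : (QuotientGroup.mk (r q)⁻¹ : G ⧸ H) = QuotientGroup.mk (r q')⁻¹ := by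
        rw [QuotientGroup.eq]
        simpa using hH
      rw [(hrspec q (hsubQ hq)).2, (hrspec q' (hsubQ hq')).2] at this
      exact hxy (this ▸ rfl)
    have := hbound t htΩ htd
    rw [htcard] at this
    exact absurd this (not_le.2 hn)
  -- assembling the final description of Ω
  refine ⟨⟨H, hHcoe⟩, hΓdis, ⟨D, hDmeas, hhaarD, hDtrans⟩, hQfin.toFinset.image r, ?_⟩
  ext x
  simp only [Set.mem_setOf_eq]
  constructor
  · intro hx
    have hP : P (QuotientGroup.mk x⁻¹) := ⟨x, hx, rfl⟩
    obtain ⟨hfΩ, hfq⟩ := hrspec _ hP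
    refine ⟨x * (r (QuotientGroup.mk x⁻¹))⁻¹, ?_, r (QuotientGroup.mk x⁻¹), ?_, by group⟩
    · have : (r (QuotientGroup.mk x⁻¹)) * x⁻¹ ∈ H := by
        have := hfq
        rw [QuotientGroup.eq] at this
        simpa using this
      have := H.inv_mem this
      simp only [mul_inv_rev, inv_inv] at this; exact this
    · exact Finset.mem_image.2 ⟨_, hQfin.mem_toFinset.2 hP, rfl⟩
  · rintro ⟨γ, hγ, f, hfF, rfl⟩
    obtain ⟨q, hq, rfl⟩ := Finset.mem_image.1 hfF
    have hPq : P q := hQfin.mem_toFinset.1 hq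
    have hfΩ : r q ∈ Ω := (hrspec q hPq).1
    have : γ * r q ∈ shift γ Ω := ⟨r q, hfΩ, rfl⟩
    rwa [hΓmem.1 hγ] at this
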